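/- Let L be a complex finite-dimensional Leibniz algebra with L/I ≅ sl2^1 ⊕ … ⊕ sl2^s ⊕ R (R solvable) and I an irreducible right sl2^1-module. Then for every i with 2 ≤ i ≤ s, the solvable part annihilates sl2^i on both sides: [R, sl2^i] = [sl2^i, R] = 0 (where R and sl2^i denote the corresponding Levi/radical subalgebras of L). -/

import Mathlib

/-- Derived series (modulo nothing) of a subspace with respect to a bilinear bracket,
used to express solvability of the radical part. -/
def derSeries {L : Type*} [AddCommGroup L] [Module ℂ L]
    (B : L →ₗ[ℂ] L →ₗ[ℂ] L) (R₀ : Submodule ℂ L) : ℕ → Submodule ℂ L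
  | 0 => R₀
  | n + 1 => Submodule.span ℂ
      {z : L | ∃ a ∈ derSeries B R₀ n, ∃ b ∈ derSeries B R₀ n, z = B a b}

/-- Let `L` be a complex finite-dimensional Leibniz algebra with
`L/I ≅ sl₂¹ ⊕ ⋯ ⊕ sl₂ˢ ⊕ R` (`R` a solvable ideal), realized by a Levi family
`e j, f j, h j` of exact `sl₂`-triples with pairwise vanishing cross brackets, a
family `y` spanning the radical complement, spanning and independence mod `I`, and
suppose the ideal `I` of squares is an irreducible right `sl₂¹`-module.  Then the
radical part annihilates the other copies on both sides:
`[R, sl₂ʲ] = [sl₂ʲ, R] = 0` for every copy `j ≠ 1`. -/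
theorem radical_annihilates_other_copies
    (L : Type*) [AddCommGroup L] [Module ℂ L] [FiniteDimensional ℂ L]
    (B : L →ₗ[ℂ] L →ₗ[ℂ] L)
    (leib : ∀ x y z : L, B x (B y z) = B (B x y) z - B (B x z) y)
    (s : ℕ) (hs : 0 < s) (e f h : Fin s → L)
    (hsl2 : ∀ j, B (e j) (h j) = (2 : ℂ) • e j ∧ B (h j) (e j) = -((2 : ℂ) • e j) ∧
      B (h j) (f j) = (2 : ℂ) • f j ∧ B (f j) (h j) = -((2 : ℂ) • f j) ∧
      B (e j) (f j) = h j ∧ B (f j) (e j) = -(h j))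
    (hcross : ∀ j k, j ≠ k →
      ∀ u ∈ ({e j, f j, h j} : Set L), ∀ v ∈ ({e k, f k, h k} : Set L), B u v = 0)
    (n : ℕ) (y : Fin n → L) (R : Submodule ℂ L)
    (hR : R = Submodule.span ℂ (Set.range y))
    (I : Submodule ℂ L)
    (hI : I = Submodule.span ℂ {a : L | ∃ x : L, a = B x x})
    -- in the quotient `L/I`, the radical part commutes with the semisimple part,
    -- is a subalgebra, and is solvable
    (hRS : ∀ i j, ∀ u ∈ ({e j, f j, h j} : Set L), B (y i) u ∈ I ∧ B u (y i) ∈ I)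
    (hRR : ∀ i i', B (y i) (y i') ∈ R ⊔ I)
    (hsolv : ∃ k, derSeries B (R ⊔ I) k ≤ I)
    -- `L/I` is spanned by the images of the `e, f, h, y`, which are independent mod `I`
    (hspan : Submodule.span ℂ
        (Set.range e ∪ Set.range f ∪ Set.range h ∪ Set.range y) ⊔ I = ⊤)
    (hindep : LinearIndependent ℂ
      (fun v : (Fin s ⊕ Fin s ⊕ Fin s ⊕ Fin n) =>
        I.mkQ (Sum.elim e (Sum.elim f (Sum.elim h y)) v)))
    -- `I` is an irreducible right `sl₂¹`-module (copy of index `0`)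
    (hIne : I ≠ ⊥)
    (hirr : ∀ J : Submodule ℂ L, J ≤ I →
      (∀ a ∈ J, B a (e ⟨0, hs⟩) ∈ J ∧ B a (f ⟨0, hs⟩) ∈ J ∧ B a (h ⟨0, hs⟩) ∈ J) →
      J = ⊥ ∨ J = I) :
    ∀ r ∈ R, ∀ j : Fin s, j ≠ ⟨0, hs⟩ →
      ∀ u ∈ ({e j, f j, h j} : Set L), B r u = 0 ∧ B u r = 0 := by
  classical
  -- left multiplication kills `I`
  have leftKill : ∀ x : L, ∀ a ∈ I, B x a = 0 := by
    intro x a ha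
    have hle : I ≤ LinearMap.ker (B x) := by
      rw [hI, Submodule.span_le]
      rintro _ ⟨z, rfl⟩
      simp only [SetLike.mem_coe, LinearMap.mem_ker]
      have := leib x z z
      simpa [sub_self] using this
    exact hle ha
  -- sums of symmetric products lie in `I`
  have sqmem : ∀ w v : L, B w v + B v w ∈ I := by
    intro w v
    have h1 : B (w + v) (w + v) ∈ I := by
      rw [hI]; exact Submodule.subset_span ⟨w + v, rfl⟩
    have h2 : B w w ∈ I := by rw [hI]; exact Submodule.subset_span ⟨w, rfl⟩
    have h3 : B v v ∈ I := by rw [hI]; exact Submodule.subset_span ⟨v, rfl⟩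
    have key : B w v + B v w = B (w + v) (w + v) - B w w - B v v := by
      simp [map_add]; abel
    rw [key]
    exact Submodule.sub_mem I (Submodule.sub_mem I h1 h2) h3
  -- `I` is invariant under all right multiplications
  have Imem : ∀ u : L, ∀ a ∈ I, B a u ∈ I := by
    intro u a ha
    have hle : I ≤ Submodule.comap (B.flip u) I := by
      rw [hI, Submodule.span_le]
      rintro _ ⟨z, rfl⟩
      simp only [SetLike.mem_coe, Submodule.mem_comap, LinearMap.flip_apply]
      have key : B (B z z) u = B z (B z u) + B (B z u) z := by
        have := leib z z u
        rw [this]; abel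
      rw [key, ← hI]
      exact sqmem z (B z u)
    exact hle ha
  -- Schur's lemma: any right multiplication commuting with the `sl₂¹`-action
  -- acts on `I` by a scalar
  have schur : ∀ u : L, B (e ⟨0, hs⟩) u = 0 → B (f ⟨0, hs⟩) u = 0 →
      B (h ⟨0, hs⟩) u = 0 → ∃ lam : ℂ, ∀ a ∈ I, B a u = lam • a := by
    intro u hue huf huh
    haveI : Nontrivial I := Submodule.nontrivial_iff_ne_bot.mpr hIne
    set T : I →ₗ[ℂ] I := (B.flip u).restrict (fun a ha => Imem u a ha) with hT
    obtain ⟨lam, hlam⟩ := Module.End.exists_eigenvalue T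
    obtain ⟨v, hv⟩ := hlam.exists_hasEigenvector
    refine ⟨lam, ?_⟩
    set J : Submodule ℂ L := I ⊓ LinearMap.ker (B.flip u - lam • LinearMap.id) with hJ
    have hmemJ : ∀ a : L, a ∈ J ↔ a ∈ I ∧ B a u = lam • a := by
      intro a
      simp [hJ, Submodule.mem_inf, LinearMap.mem_ker, LinearMap.sub_apply,
        LinearMap.flip_apply, LinearMap.smul_apply, sub_eq_zero]
    have hinv : ∀ a ∈ J, B a (e ⟨0, hs⟩) ∈ J ∧ B a (f ⟨0, hs⟩) ∈ J ∧
        B a (h ⟨0, hs⟩) ∈ J := by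
      intro a haJ
      obtain ⟨haI, hau⟩ := (hmemJ a).mp haJ
      have step : ∀ w : L, B w u = 0 → B a w ∈ I → B a w ∈ J := by
        intro w hw hawI
        refine (hmemJ _).mpr ⟨hawI, ?_⟩
        have := leib a w u
        rw [hw] at this
        simp only [map_zero] at this
        have h2 : B (B a w) u = B (B a u) w := sub_eq_zero.mp this.symm
        rw [h2, hau, map_smul, LinearMap.smul_apply]
      exact ⟨step _ hue (Imem _ a haI), step _ huf (Imem _ a haI),
        step _ huh (Imem _ a haI)⟩
    rcases hirr J inf_le_left hinv with hbot | htop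
    · exfalso
      have hvJ : (v : L) ∈ J := by
        refine (hmemJ _).mpr ⟨v.2, ?_⟩
        have := hv.1
        have hTv : T v = lam • v := by
          rwa [Module.End.mem_eigenspace_iff] at this
        have : ((T v : I) : L) = ((lam • v : I) : L) := by rw [hTv]
        exact this
      rw [hbot] at hvJ
      exact hv.2 (Subtype.ext (by simpa using hvJ))
    · intro a ha
      have : a ∈ J := htop ▸ ha
      exact ((hmemJ a).mp this).2
  -- the key step: `I` annihilates every other copy on the right
  intro r hr j hj u hu
  have hj' : (⟨0, hs⟩ : Fin s) ≠ j := Ne.symm hj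
  have he0 : e ⟨0, hs⟩ ∈ ({e ⟨0, hs⟩, f ⟨0, hs⟩, h ⟨0, hs⟩} : Set L) := by simp
  have hf0 : f ⟨0, hs⟩ ∈ ({e ⟨0, hs⟩, f ⟨0, hs⟩, h ⟨0, hs⟩} : Set L) := by simp
  have hh0 : h ⟨0, hs⟩ ∈ ({e ⟨0, hs⟩, f ⟨0, hs⟩, h ⟨0, hs⟩} : Set L) := by simp
  have hej : e j ∈ ({e j, f j, h j} : Set L) := by simp
  have hfj : f j ∈ ({e j, f j, h j} : Set L) := by simp
  have hhj : h j ∈ ({e j, f j, h j} : Set L) := by simp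
  obtain ⟨lamE, hlamE⟩ := schur (e j) (hcross _ _ hj' _ he0 _ hej)
    (hcross _ _ hj' _ hf0 _ hej) (hcross _ _ hj' _ hh0 _ hej)
  obtain ⟨lamF, hlamF⟩ := schur (f j) (hcross _ _ hj' _ he0 _ hfj)
    (hcross _ _ hj' _ hf0 _ hfj) (hcross _ _ hj' _ hh0 _ hfj)
  obtain ⟨hEH, hHE, hHF, hFH, hEF, hFE⟩ := hsl2 j
  -- `I • h j = 0`
  have IH : ∀ a ∈ I, B a (h j) = 0 := by
    intro a ha
    have := leib a (e j) (f j)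
    rw [hEF] at this
    rw [this, hlamE a ha, hlamF a ha, map_smul, map_smul,
      LinearMap.smul_apply, LinearMap.smul_apply, hlamF a ha, hlamE a ha,
      smul_smul, smul_smul, mul_comm, sub_self]
  -- `I • e j = 0` and `I • f j = 0`
  have IE : ∀ a ∈ I, B a (e j) = 0 := by
    intro a ha
    have key := leib a (e j) (h j)
    rw [hEH, IH _ (Imem (e j) a ha), IH a ha] at key
    simpa using key
  have IF : ∀ a ∈ I, B a (f j) = 0 := by
    intro a ha
    have key := leib a (f j) (h j)
    rw [hFH, IH _ (Imem (f j) a ha), IH a ha] at key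
    simpa using key
  have Ikill : ∀ a ∈ I, ∀ w ∈ ({e j, f j, h j} : Set L), B a w = 0 := by
    intro a ha w hw
    rcases hw with hw | hw | hw
    · rw [hw]; exact IE a ha
    · rw [hw]; exact IF a ha
    · rw [hw]; exact IH a ha
  -- radical generators annihilate the copy `j` on the right
  have yE : ∀ i, B (y i) (e j) = 0 := by
    intro i
    have key := leib (y i) (e j) (h j)
    rw [hEH, Ikill _ ((hRS i j _ hej).1) _ hhj, Ikill _ ((hRS i j _ hhj).1) _ hej] at key
    simpa using key
  have yF : ∀ i, B (y i) (f j) = 0 := by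
    intro i
    have key := leib (y i) (f j) (h j)
    rw [hFH, Ikill _ ((hRS i j _ hfj).1) _ hhj, Ikill _ ((hRS i j _ hhj).1) _ hfj] at key
    simpa using key
  have yH : ∀ i, B (y i) (h j) = 0 := by
    intro i
    have key := leib (y i) (e j) (f j)
    rw [hEF, Ikill _ ((hRS i j _ hej).1) _ hfj, Ikill _ ((hRS i j _ hfj).1) _ hej] at key
    simpa using key
  -- and on the left
  have Hy : ∀ i, B (h j) (y i) = 0 := by
    intro i
    have key := leib (e j) (f j) (y i)
    rw [hEF, leftKill _ _ ((hRS i j _ hfj).2), Ikill _ ((hRS i j _ hej).2) _ hfj] at key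
    simpa using key.symm
  have Ey : ∀ i, B (e j) (y i) = 0 := by
    intro i
    have key := leib (h j) (e j) (y i)
    rw [hHE, leftKill _ _ ((hRS i j _ hej).2), Ikill _ ((hRS i j _ hhj).2) _ hej] at key
    simpa using key.symm
  have Fy : ∀ i, B (f j) (y i) = 0 := by
    intro i
    have key := leib (h j) (f j) (y i)
    rw [hHF, leftKill _ _ ((hRS i j _ hfj).2), Ikill _ ((hRS i j _ hhj).2) _ hfj] at key
    simpa using key.symm
  -- conclude by linearity over the span
  constructor
  · have hle : R ≤ LinearMap.ker (B.flip u) := by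
      rw [hR, Submodule.span_le]
      rintro _ ⟨i, rfl⟩
      simp only [SetLike.mem_coe, LinearMap.mem_ker, LinearMap.flip_apply]
      rcases hu with hu | hu | hu
      · rw [hu]; exact yE i
      · rw [hu]; exact yF i
      · rw [hu]; exact yH i
    exact hle hr
  · have hle : R ≤ LinearMap.ker (B u) := by
      rw [hR, Submodule.span_le]
      rintro _ ⟨i, rfl⟩
      simp only [SetLike.mem_coe, LinearMap.mem_ker]
      rcases hu with hu | hu | hu
      · rw [hu]; exact Ey i
      · rw [hu]; exact Fy i
      · rw [hu]; exact Hy i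
    exact hle hr
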